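/- If I(S;P) = 0 and I(S;A) = I(U;A) where U determines both S and P (S = σ(U), P = π(U) as deterministic functions), then I(P;A) = 0: a sensitive-blind representation that is independent of a sufficient sensitive representation carries no sensitive information — provided additionally that A is conditionally independent of U given S. -/

import Mathlib

open Finset

lemma sbi_key
    {U A Sv Pv : Type*} [Fintype U] [Fintype A]
    [Fintype Sv] [DecidableEq Sv] [Fintype Pv] [DecidableEq Pv]
    (p : U × A → ℝ)
    (hp : ∀ x, 0 ≤ p x)
    (σ : U → Sv) (π : U → Pv)
    (hSP : ∀ (s : Sv) (t : Pv),
      (∑ u, if σ u = s ∧ π u = t then (∑ a, p (u, a)) else 0)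
        = (∑ u, if σ u = s then (∑ a, p (u, a)) else 0)
          * (∑ u, if π u = t then (∑ a, p (u, a)) else 0))
    (hAUS : ∀ u a, 0 < (∑ a', p (u, a')) →
      p (u, a) / (∑ a', p (u, a'))
        = (∑ u', if σ u' = σ u then p (u', a) else 0)
          / (∑ u', if σ u' = σ u then (∑ a', p (u', a')) else 0))
    (t : Pv) (a : A) :
      (∑ u, if π u = t then p (u, a) else 0)
        = (∑ u, if π u = t then (∑ a', p (u, a')) else 0)
          * (∑ u, p (u, a)) := by
  have hpU_nonneg : ∀ u, 0 ≤ ∑ a', p (u, a') :=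
    fun u => Finset.sum_nonneg fun a' _ => hp _
  have hp_le_pU : ∀ u (a : A), p (u, a) ≤ ∑ a', p (u, a') := fun u a =>
    Finset.single_le_sum (fun a' _ => hp (u, a')) (Finset.mem_univ a)
  have hp_zero : ∀ u, (∑ a', p (u, a')) = 0 → ∀ a : A, p (u, a) = 0 := by
    intro u h a
    have h1 := hp_le_pU u a
    have h2 := hp (u, a)
    linarith
  have hpS_nonneg : ∀ s : Sv, 0 ≤ ∑ u, if σ u = s then (∑ a', p (u, a')) else 0 := by
    intro s
    refine Finset.sum_nonneg fun u _ => ?_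
    split <;> [exact hpU_nonneg u; exact le_rfl]
  -- pointwise identity
  have hu : ∀ u, p (u, a) = (∑ a', p (u, a')) *
      ((∑ u', if σ u' = σ u then p (u', a) else 0)
        / (∑ u', if σ u' = σ u then (∑ a', p (u', a')) else 0)) := by
    intro u
    by_cases h : 0 < ∑ a', p (u, a')
    · have h1 := hAUS u a h
      rw [← h1]
      field_simp
    · have h0 : (∑ a', p (u, a')) = 0 := le_antisymm (not_lt.mp h) (hpU_nonneg u)
      simp [hp_zero u h0 a, h0]
  -- if pS s = 0 then g s a = 0
  have hg0 : ∀ s : Sv, (∑ u, if σ u = s then (∑ a', p (u, a')) else 0) = 0 →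
      (∑ u, if σ u = s then p (u, a) else 0) = 0 := by
    intro s hs
    refine Finset.sum_eq_zero fun u _ => ?_
    by_cases h1 : σ u = s
    · have := (Finset.sum_eq_zero_iff_of_nonneg (fun u _ => by
        split <;> [exact hpU_nonneg _; exact le_rfl])).mp hs u (Finset.mem_univ u)
      rw [if_pos h1] at this
      simp [h1, hp_zero u this a]
    · simp [h1]
  calc ∑ u, (if π u = t then p (u, a) else 0)
      = ∑ u, (if π u = t then (∑ a', p (u, a')) *
          ((∑ u', if σ u' = σ u then p (u', a) else 0)
            / (∑ u', if σ u' = σ u then (∑ a', p (u', a')) else 0)) else 0) := by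
        refine Finset.sum_congr rfl fun u _ => ?_
        rw [← hu u]
    _ = ∑ u, ∑ s, (if σ u = s then (if π u = t then (∑ a', p (u, a')) *
          ((∑ u', if σ u' = s then p (u', a) else 0)
            / (∑ u', if σ u' = s then (∑ a', p (u', a')) else 0)) else 0) else 0) := by
        refine Finset.sum_congr rfl fun u _ => ?_
        rw [Finset.sum_ite_eq]
        simp
    _ = ∑ s, ∑ u, (if σ u = s ∧ π u = t then (∑ a', p (u, a')) else 0) *
          ((∑ u', if σ u' = s then p (u', a) else 0)
            / (∑ u', if σ u' = s then (∑ a', p (u', a')) else 0)) := by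
        rw [Finset.sum_comm]
        refine Finset.sum_congr rfl fun s _ => Finset.sum_congr rfl fun u _ => ?_
        by_cases h1 : σ u = s <;> by_cases h2 : π u = t <;> simp [h1, h2]
    _ = ∑ s, ((∑ u, if σ u = s then (∑ a', p (u, a')) else 0)
            * (∑ u, if π u = t then (∑ a', p (u, a')) else 0)) *
          ((∑ u', if σ u' = s then p (u', a) else 0)
            / (∑ u', if σ u' = s then (∑ a', p (u', a')) else 0)) := by
        refine Finset.sum_congr rfl fun s _ => ?_
        rw [← Finset.sum_mul, hSP s t]
    _ = ∑ s, (∑ u, if π u = t then (∑ a', p (u, a')) else 0)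
            * (∑ u', if σ u' = s then p (u', a) else 0) := by
        refine Finset.sum_congr rfl fun s _ => ?_
        by_cases h : (∑ u, if σ u = s then (∑ a', p (u, a')) else 0) = 0
        · rw [h, hg0 s h]
          ring
        · field_simp
    _ = (∑ u, if π u = t then (∑ a', p (u, a')) else 0) * (∑ u, p (u, a)) := by
        rw [← Finset.mul_sum]
        congr 1
        rw [Finset.sum_comm]
        refine Finset.sum_congr rfl fun u _ => ?_
        rw [Finset.sum_ite_eq]
        simp

theorem sensitive_blind_independence
    {U A Sv Pv : Type*} [Fintype U] [Fintype A]
    [Fintype Sv] [DecidableEq Sv] [Fintype Pv] [DecidableEq Pv]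
    (p : U × A → ℝ)
    (hp : ∀ x, 0 ≤ p x) (hpsum : ∑ x, p x = 1)
    (σ : U → Sv) (π : U → Pv)
    (hSP : ∀ (s : Sv) (t : Pv),
      (∑ u, if σ u = s ∧ π u = t then (∑ a, p (u, a)) else 0)
        = (∑ u, if σ u = s then (∑ a, p (u, a)) else 0)
          * (∑ u, if π u = t then (∑ a, p (u, a)) else 0))
    (hAUS : ∀ u a, 0 < (∑ a', p (u, a')) →
      p (u, a) / (∑ a', p (u, a'))
        = (∑ u', if σ u' = σ u then p (u', a) else 0)
          / (∑ u', if σ u' = σ u then (∑ a', p (u', a')) else 0)) :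
    (∀ (t : Pv) (a : A),
      (∑ u, if π u = t then p (u, a) else 0)
        = (∑ u, if π u = t then (∑ a', p (u, a')) else 0)
          * (∑ u, p (u, a)))
    ∧ (∑ t : Pv, ∑ a : A,
        (∑ u, if π u = t then p (u, a) else 0) *
          Real.log ((∑ u, if π u = t then p (u, a) else 0) /
            ((∑ a', ∑ u, if π u = t then p (u, a') else 0)
              * (∑ t', ∑ u, if π u = t' then p (u, a) else 0)))
        = 0) := by
  have key := sbi_key p hp σ π hSP hAUS
  refine ⟨key, ?_⟩
  have hA1 : ∑ a : A, ∑ u, p (u, a) = 1 := by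
    rw [Finset.sum_comm, ← Fintype.sum_prod_type]
    exact hpsum
  have hP1 : (∑ t : Pv, ∑ u, if π u = t then (∑ a', p (u, a')) else 0) = 1 := by
    rw [Finset.sum_comm]
    calc ∑ u, ∑ t : Pv, (if π u = t then (∑ a', p (u, a')) else 0)
        = ∑ u, ∑ a', p (u, a') := by
          refine Finset.sum_congr rfl fun u _ => ?_
          rw [Finset.sum_ite_eq]
          simp
      _ = 1 := by rw [← Fintype.sum_prod_type]; exact hpsum
  refine Finset.sum_eq_zero fun t _ => Finset.sum_eq_zero fun a _ => ?_
  simp only [key]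
  have h1 : ∑ a', (∑ u, if π u = t then (∑ a'', p (u, a'')) else 0) * (∑ u, p (u, a'))
      = (∑ u, if π u = t then (∑ a'', p (u, a'')) else 0) := by
    rw [← Finset.mul_sum, hA1, mul_one]
  have h2 : ∑ t', (∑ u, if π u = t' then (∑ a'', p (u, a'')) else 0) * (∑ u, p (u, a))
      = (∑ u, p (u, a)) := by
    rw [← Finset.sum_mul, hP1, one_mul]
  rw [h1, h2]
  by_cases h : (∑ u, if π u = t then (∑ a', p (u, a')) else 0) * (∑ u, p (u, a)) = 0
  · rw [h, zero_mul]
  · rw [div_self h, Real.log_one, mul_zero]
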